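/- Let P(x|v,e) = ∏_{i=1}^n P(x_i | v_i, x_{<i}, v_{<i}, e) be a conditional distribution of outputs given inputs (a sequential process: the output at round i depends only on inputs up to round i). Suppose each single-round conditional distribution satisfies max_{x_i} P(x_i|v_i, x_{<i}, v_{<i}, e) ≤ g(I_i) where I_i is the conditional Bell expectation of round i, and g is positive, log-concave and monotonically decreasing. Then on the set G_μ = {(x,v,e) : (1/n)∑_i I_i ≥ Ī(x,v) − μ}, we have P(x|v,e) ≤ g(Ī(x,v) − μ)^n. -/

import Mathlib

/-- On the set `G_μ`, the sequential output probability `P(x|v,e)` is bounded by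
`g(Ī(x,v) - μ)^n`, given per-round bounds `P(x_i|·) ≤ g(I_i)` with `g` positive,
log-concave and monotonically decreasing. -/
theorem sequential_prob_le_bell_bound
    {Xt Vt Et : Type*} [Fintype Xt] [Fintype Vt] [Fintype Et]
    (n : ℕ) (hn : 0 < n)
    (P : (Fin n → Xt) → (Fin n → Vt) → Et → ℝ)
    (pr : Fin n → Xt → Vt → (Fin n → Xt) → (Fin n → Vt) → Et → ℝ)
    (Ii : Fin n → (Fin n → Xt) → (Fin n → Vt) → Et → ℝ)
    (g : ℝ → ℝ) (hpos : ∀ x, 0 < g x)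
    (hlc : ConcaveOn ℝ Set.univ fun x => Real.log (g x)) (hmono : Antitone g)
    (Ibar : (Fin n → Xt) → (Fin n → Vt) → ℝ) (μ0 : ℝ)
    (hchain : ∀ x v e, P x v e = ∏ i, pr i (x i) (v i) x v e)
    (hnn : ∀ i xi vi x v e, 0 ≤ pr i xi vi x v e)
    (hround : ∀ i xi x v e, pr i xi (v i) x v e ≤ g (Ii i x v e))
    (x : Fin n → Xt) (v : Fin n → Vt) (e : Et)
    (hG : (1 / n : ℝ) * ∑ i, Ii i x v e ≥ Ibar x v - μ0) :
    P x v e ≤ g (Ibar x v - μ0) ^ n := by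
  have hnR : (0:ℝ) < n := by exact_mod_cast hn
  set A : ℝ := (1 / n : ℝ) * ∑ i, Ii i x v e with hA
  -- step 1: P ≤ ∏ g(I_i)
  have h1 : P x v e ≤ ∏ i, g (Ii i x v e) := by
    rw [hchain]
    exact Finset.prod_le_prod (fun i _ => hnn i (x i) (v i) x v e)
      (fun i _ => hround i (x i) x v e)
  -- step 2: ∏ g(I_i) ≤ g(A)^n via Jensen on log
  have hjensen : ∑ i : Fin n, (1 / n : ℝ) • Real.log (g (Ii i x v e)) ≤
      Real.log (g (∑ i : Fin n, (1 / n : ℝ) • Ii i x v e)) := by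
    apply hlc.le_map_sum (fun _ _ => by positivity)
    · simp [Finset.sum_const, Finset.card_univ]
      field_simp
    · intro i _; trivial
  have hsum : (∑ i : Fin n, (1 / n : ℝ) • Ii i x v e) = A := by
    rw [hA, Finset.mul_sum]; simp [smul_eq_mul]
  rw [hsum] at hjensen
  have h2 : ∏ i, g (Ii i x v e) ≤ g A ^ n := by
    have hlog : Real.log (∏ i, g (Ii i x v e)) ≤ Real.log (g A ^ n) := by
      rw [Real.log_prod (fun i _ => (hpos _).ne'), Real.log_pow]
      have : ∑ i : Fin n, Real.log (g (Ii i x v e)) =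
          n * ∑ i : Fin n, (1 / n : ℝ) • Real.log (g (Ii i x v e)) := by
        rw [Finset.mul_sum]
        congr 1; ext i
        simp [smul_eq_mul]
        field_simp
      rw [this]
      simpa [nsmul_eq_mul] using mul_le_mul_of_nonneg_left hjensen hnR.le

    have hprodpos : 0 < ∏ i, g (Ii i x v e) :=
      Finset.prod_pos fun i _ => hpos _
    have := Real.exp_le_exp.mpr hlog
    rwa [Real.exp_log hprodpos, Real.exp_log (pow_pos (hpos A) n)] at this
  -- step 3: g(A) ≤ g(Ibar - μ0)
  have h3 : g A ≤ g (Ibar x v - μ0) := hmono hG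
  calc P x v e ≤ ∏ i, g (Ii i x v e) := h1
    _ ≤ g A ^ n := h2
    _ ≤ g (Ibar x v - μ0) ^ n := pow_le_pow_left₀ (hpos A).le h3 n
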